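/- (Descent lemma along a segment.) Let f : R^d → R be twice continuously differentiable, let θ̂, θ* ∈ R^d with θ̂ ≠ θ*, and let γ, L > 0 with γ ≤ 2L‖θ̂ − θ*‖. Suppose (i) ⟨∇f(θ̂), θ̂ − θ*⟩ ≥ γ ‖θ̂ − θ*‖ > 0, and (ii) for every point θ̄ on the line segment joining θ̂ and θ*, ((θ̂−θ*)/‖θ̂−θ*‖)ᵀ ∇²f(θ̄) ((θ̂−θ*)/‖θ̂−θ*‖) ≤ 2L. Then there exists θ ∈ R^d (a point on the segment joining θ̂ and θ*) such that f(θ) ≤ f(θ̂) − γ²/(4L). -/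

import Mathlib

open scoped RealInnerProductSpace

/-- **Descent lemma along a segment.** If `f` is `C²`, `0 < γ ≤ 2L‖θ̂ - θ*‖`,
`⟨∇f(θ̂), θ̂ - θ*⟩ ≥ γ‖θ̂ - θ*‖ > 0`, and the normalized Hessian quadratic form along the
segment joining `θ̂` and `θ*` is bounded by `2L`, then some point `θ` on that segment satisfies
`f(θ) ≤ f(θ̂) - γ²/(4L)`. -/
theorem descent_lemma_segment
    {d : ℕ} (f : EuclideanSpace ℝ (Fin d) → ℝ) (hf : ContDiff ℝ 2 f)
    (θh θs : EuclideanSpace ℝ (Fin d)) (hne : θh ≠ θs)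
    (γ L : ℝ) (hγ : 0 < γ) (hL : 0 < L) (hγL : γ ≤ 2 * L * ‖θh - θs‖)
    (hgrad : ⟪gradient f θh, θh - θs⟫ ≥ γ * ‖θh - θs‖)
    (hgradpos : γ * ‖θh - θs‖ > 0)
    (hHess : ∀ θ ∈ segment ℝ θh θs,
      fderiv ℝ (fderiv ℝ f) θ (‖θh - θs‖⁻¹ • (θh - θs)) (‖θh - θs‖⁻¹ • (θh - θs)) ≤ 2 * L) :
    ∃ θ ∈ segment ℝ θh θs, f θ ≤ f θh - γ ^ 2 / (4 * L) := by
  set R : ℝ := ‖θh - θs‖ with hRdef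
  have hR : 0 < R := norm_pos_iff.mpr (sub_ne_zero.mpr hne)
  set u : EuclideanSpace ℝ (Fin d) := R⁻¹ • (θh - θs) with hu
  set c : ℝ → EuclideanSpace ℝ (Fin d) := fun t => θh - t • u with hc
  -- membership of the path in the segment
  have hmem : ∀ t ∈ Set.Icc (0:ℝ) R, c t ∈ segment ℝ θh θs := by
    intro t ht
    rw [segment_eq_image']
    refine ⟨t / R, ⟨div_nonneg ht.1 hR.le, (div_le_one hR).mpr ht.2⟩, ?_⟩
    have key : (t / R) • (θs - θh) = -(t • u) := by
      rw [hu, smul_smul, ← smul_neg, neg_sub, div_eq_mul_inv]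
    show θh + (t / R) • (θs - θh) = c t
    rw [key, hc, ← sub_eq_add_neg]
  -- derivative of the path
  have hcdiff : ∀ t : ℝ, HasDerivAt c (-u) t := by
    intro t
    simpa using ((hasDerivAt_id t).smul_const u).const_sub θh
  have hf1 : ContDiff ℝ 1 (fderiv ℝ f) := hf.fderiv_right (by norm_num)
  have hfd : Differentiable ℝ f := hf.differentiable (by norm_num)
  have hf1d : Differentiable ℝ (fderiv ℝ f) := hf1.differentiable (by norm_num)
  -- first derivative of g = f ∘ c
  set g : ℝ → ℝ := fun t => f (c t) with hg
  set g1 : ℝ → ℝ := fun t => fderiv ℝ f (c t) (-u) with hg1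
  have hgderiv : ∀ t : ℝ, HasDerivAt g (g1 t) t := fun t =>
    (hfd.differentiableAt.hasFDerivAt.comp_hasDerivAt t (hcdiff t))
  -- second derivative
  set g2 : ℝ → ℝ := fun t => fderiv ℝ (fderiv ℝ f) (c t) u u with hg2
  have hg1deriv : ∀ t : ℝ, HasDerivAt g1 (g2 t) t := by
    intro t
    have h1 : HasDerivAt (fun s => fderiv ℝ f (c s)) (fderiv ℝ (fderiv ℝ f) (c t) (-u)) t :=
      (hf1d.differentiableAt.hasFDerivAt.comp_hasDerivAt t (hcdiff t))
    have h2 := h1.clm_apply (hasDerivAt_const t (-u))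
    simp only [hg1, hg2]
    simpa [map_neg] using h2
  have hg1cont : Continuous g1 :=
    Differentiable.continuous (fun t => (hg1deriv t).differentiableAt)
  have hgcont : Continuous g :=
    Differentiable.continuous (fun t => (hgderiv t).differentiableAt)
  -- bound on g2 along [0, R]
  have hg2le : ∀ t ∈ Set.Icc (0:ℝ) R, g2 t ≤ 2 * L := fun t ht => hHess _ (hmem t ht)
  -- value of g1 at 0
  have hg10 : g1 0 ≤ -γ := by
    have hfder : fderiv ℝ f θh (θh - θs) = ⟪gradient f θh, θh - θs⟫ := by
      rw [gradient, InnerProductSpace.toDual_symm_apply]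
    have hval : g1 0 = -(R⁻¹ * fderiv ℝ f θh (θh - θs)) := by
      simp [hg1, hc, hu, map_neg, map_smul, smul_eq_mul]
    rw [hval, hfder]
    have h1 : R⁻¹ * (γ * R) ≤ R⁻¹ * ⟪gradient f θh, θh - θs⟫ :=
      mul_le_mul_of_nonneg_left hgrad (inv_nonneg.mpr hR.le)
    have h2 : R⁻¹ * (γ * R) = γ := by field_simp
    linarith
  -- set T and prove the bound
  set T : ℝ := γ / (2 * L) with hT
  have hTpos : 0 < T := div_pos hγ (by linarith)
  have hTR : T ≤ R := (div_le_iff₀ (by linarith)).mpr (by linarith [hγL])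
  have hIcc : Set.Icc (0:ℝ) T ⊆ Set.Icc 0 R := Set.Icc_subset_Icc le_rfl hTR
  -- step 1: g1 t ≤ g1 0 + 2L t on [0,T]
  have hD : ∀ x : ℝ, HasDerivAt (fun t => g1 t - 2 * L * t) (g2 x - 2 * L) x := by
    intro x
    exact (hg1deriv x).sub (by simpa using (hasDerivAt_id x).const_mul (2*L))
  have hφ : AntitoneOn (fun t => g1 t - 2 * L * t) (Set.Icc 0 T) := by
    apply antitoneOn_of_deriv_nonpos (convex_Icc 0 T)
    · exact (hg1cont.sub (continuous_const.mul continuous_id)).continuousOn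
    · intro x _
      exact (hD x).differentiableAt.differentiableWithinAt
    · intro x hx
      rw [interior_Icc] at hx
      rw [(hD x).deriv]
      have hb : g2 x ≤ 2 * L := hg2le x (hIcc ⟨hx.1.le, hx.2.le⟩)
      linarith
  have hg1le : ∀ t ∈ Set.Icc (0:ℝ) T, g1 t ≤ -γ + 2 * L * t := by
    intro t ht
    have := hφ (Set.left_mem_Icc.mpr hTpos.le) ht ht.1
    simp only [mul_zero, sub_zero] at this
    linarith [hg10]
  -- step 2: ψ(t) = g t + γ t - L t² antitone on [0,T]
  have hE : ∀ x : ℝ, HasDerivAt (fun t => g t + γ * t - L * t ^ 2)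
      (g1 x + γ - L * (2 * x)) x := by
    intro x
    refine ((hgderiv x).add (by simpa using (hasDerivAt_id x).const_mul γ)).sub ?_
    simpa using (hasDerivAt_pow 2 x).const_mul L
  have hψ : AntitoneOn (fun t => g t + γ * t - L * t ^ 2) (Set.Icc 0 T) := by
    apply antitoneOn_of_deriv_nonpos (convex_Icc 0 T)
    · exact ((hgcont.add (continuous_const.mul continuous_id)).sub
        (continuous_const.mul (continuous_pow 2))).continuousOn
    · intro x _
      exact (hE x).differentiableAt.differentiableWithinAt
    · intro x hx
      rw [interior_Icc] at hx
      rw [(hE x).deriv]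
      have h1 := hg1le x ⟨hx.1.le, hx.2.le⟩
      nlinarith [h1]
  refine ⟨c T, hmem T ⟨hTpos.le, hTR⟩, ?_⟩
  have h0 : (0:ℝ) ∈ Set.Icc (0:ℝ) T := Set.left_mem_Icc.mpr hTpos.le
  have hTm : T ∈ Set.Icc (0:ℝ) T := Set.right_mem_Icc.mpr hTpos.le
  have hfin := hψ h0 hTm hTpos.le
  simp only [mul_zero, add_zero, sub_zero, pow_two] at hfin
  have hg0 : g 0 = f θh := by simp [hg, hc]
  have hTval : γ * T - L * (T * T) = γ ^ 2 / (4 * L) := by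
    rw [hT]; field_simp; ring
  have hres : g T ≤ f θh - (γ * T - L * (T*T)) := by
    rw [← hg0]; linarith [hfin]
  rw [hTval] at hres
  exact hres
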